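/- Let θ > 0 be irrational and let C > 1 be a natural number. Then there exist infinitely many natural numbers m > 0 such that, writing α = {C^m θ} and β = {C^{m+1} θ}, one has C^{−2} < |α − β| < 1 − C^{−2}. -/

import Mathlib

lemma aux_ineq (C : ℕ) (hC : 1 < C) (α β γ : ℝ) (k j : ℤ)
    (hk0 : (0:ℝ) ≤ (k:ℝ)) (hj0 : (0:ℝ) ≤ (j:ℝ)) (hk1 : (k:ℝ) ≤ (C:ℝ) - 1)
    (hj1 : (j:ℝ) ≤ (C:ℝ) - 1)
    (hβ : (C:ℝ) * α = k + β) (hγ : (C:ℝ) * β = j + γ)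
    (hγ0 : 0 < γ) (hγ1 : γ < 1) (hne : k ≠ j) :
    ((C : ℝ) ^ 2)⁻¹ < |α - β| ∧ |α - β| < 1 - ((C : ℝ) ^ 2)⁻¹ := by
  have hC1 : (1:ℝ) < C := by exact_mod_cast hC
  have hC2 : (0:ℝ) < (C:ℝ)^2 := by positivity
  have hv : (C:ℝ)^2 * (α - β) = C * k - ((C:ℝ)-1) * j - ((C:ℝ)-1) * γ := by
    linear_combination (C:ℝ) * hβ - (C:ℝ) * hγ + hγ
  have key : 1 < (C:ℝ)^2 * |α - β| ∧ (C:ℝ)^2 * |α - β| < (C:ℝ)^2 - 1 := by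
    rcases lt_or_gt_of_ne hne with h | h
    · -- k < j : α - β < 0
      have hjk : (k:ℝ) + 1 ≤ j := by exact_mod_cast Int.add_one_le_of_lt h
      have hneg : α - β < 0 := by nlinarith
      rw [abs_of_neg hneg]
      constructor
      · nlinarith
      · nlinarith
    · -- j < k : α - β > 0
      have hjk : (j:ℝ) + 1 ≤ k := by exact_mod_cast Int.add_one_le_of_lt h
      have hpos : 0 < α - β := by nlinarith
      rw [abs_of_pos hpos]
      constructor
      · nlinarith
      · nlinarith
  have hinv : (C:ℝ)^2 * ((C:ℝ)^2)⁻¹ = 1 := mul_inv_cancel₀ (ne_of_gt hC2)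
  obtain ⟨h1, h2⟩ := key
  constructor
  · nlinarith [abs_nonneg (α - β)]
  · nlinarith [abs_nonneg (α - β)]

theorem stmt2 (θ : ℝ) (hθpos : 0 < θ) (hθ : Irrational θ) (C : ℕ) (hC : 1 < C) :
    {m : ℕ | 0 < m ∧
      ((C : ℝ) ^ 2)⁻¹ < |Int.fract ((C : ℝ) ^ m * θ) - Int.fract ((C : ℝ) ^ (m + 1) * θ)| ∧
      |Int.fract ((C : ℝ) ^ m * θ) - Int.fract ((C : ℝ) ^ (m + 1) * θ)| <
        1 - ((C : ℝ) ^ 2)⁻¹}.Infinite := by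
  have hC1 : (1:ℝ) < C := by exact_mod_cast hC
  have hC0 : (0:ℝ) < C := lt_trans one_pos hC1
  set x : ℕ → ℝ := fun m => Int.fract ((C:ℝ) ^ m * θ) with hxdef
  have hirr : ∀ m, Irrational ((C:ℝ) ^ m * θ) := by
    intro m
    have h1 : ((C:ℝ) ^ m) = ((C ^ m : ℕ) : ℝ) := by push_cast; ring
    rw [h1]
    exact hθ.natCast_mul (by positivity)
  have hxirr : ∀ m, Irrational (x m) := by
    intro m
    have h := (hirr m).sub_intCast ⌊(C:ℝ) ^ m * θ⌋
    show Irrational (Int.fract ((C:ℝ) ^ m * θ))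
    rwa [Int.fract]
  have hx0 : ∀ m, 0 < x m := by
    intro m
    rcases (Int.fract_nonneg ((C:ℝ) ^ m * θ)).lt_or_eq with h | h
    · exact h
    · exfalso
      apply (hirr m).ne_int ⌊(C:ℝ) ^ m * θ⌋
      have h' := h.symm
      rw [Int.fract] at h'
      linarith
  have hx1 : ∀ m, x m < 1 := fun m => Int.fract_lt_one _
  have hstep : ∀ m, x (m+1) = Int.fract ((C:ℝ) * x m) := by
    intro m
    have h1 : (C:ℝ)^(m+1)*θ = (C:ℝ) * Int.fract ((C:ℝ)^m*θ) + ((C * ⌊(C:ℝ)^m*θ⌋ : ℤ) : ℝ) := by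
      push_cast
      rw [Int.fract]
      ring
    show Int.fract ((C:ℝ)^(m+1)*θ) = _
    rw [h1, Int.fract_add_intCast]
  set k : ℕ → ℤ := fun m => ⌊(C:ℝ) * x m⌋ with hkdef
  have hfrac : ∀ m, (C:ℝ) * x m = (k m : ℝ) + x (m+1) := by
    intro m
    rw [hstep m, Int.fract]
    ring
  have hk0 : ∀ m, (0:ℝ) ≤ (k m : ℝ) := by
    intro m
    have : (0:ℤ) ≤ k m := Int.floor_nonneg.mpr (mul_nonneg hC0.le (hx0 m).le)
    exact_mod_cast this
  have hk1 : ∀ m, (k m : ℝ) ≤ (C:ℝ) - 1 := by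
    intro m
    have h1 : k m < (C:ℤ) := by
      rw [hkdef]
      apply Int.floor_lt.mpr
      push_cast
      nlinarith [hx1 m, hx0 m]
    have h2 : k m ≤ (C:ℤ) - 1 := by omega
    have h3 : ((k m : ℤ) : ℝ) ≤ (((C:ℤ) - 1 : ℤ) : ℝ) := by exact_mod_cast h2
    push_cast at h3
    linarith
  have hmain : ∀ m, k m ≠ k (m+1) →
      ((C : ℝ) ^ 2)⁻¹ < |x m - x (m+1)| ∧ |x m - x (m+1)| < 1 - ((C : ℝ) ^ 2)⁻¹ :=
    fun m hne => aux_ineq C hC (x m) (x (m+1)) (x (m+2)) (k m) (k (m+1))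
      (hk0 m) (hk0 (m+1)) (hk1 m) (hk1 (m+1)) (hfrac m) (hfrac (m+1))
      (hx0 (m+2)) (hx1 (m+2)) hne
  apply Set.infinite_of_forall_exists_gt
  intro n
  by_contra hcon
  push_neg at hcon
  have hconst : ∀ m, n < m → k m = k (m+1) := by
    intro m hm
    by_contra hne
    have h := hmain m hne
    exact absurd hm (not_lt.mpr (hcon m ⟨by omega, h.1, h.2⟩))
  set N := n + 1 with hN
  set d := k N with hd
  have hkconst : ∀ i, k (N + i) = d := by
    intro i
    induction i with
    | zero => rfl
    | succ i ih => rw [← ih, ← Nat.add_assoc]; exact (hconst (N + i) (by omega)).symm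
  set y : ℕ → ℝ := fun m => x m - (d:ℝ) / ((C:ℝ) - 1) with hydef
  have hC1' : (C:ℝ) - 1 ≠ 0 := by linarith
  have hyrec : ∀ i, y (N + i) = (C:ℝ)^i * y N := by
    intro i
    induction i with
    | zero => simp
    | succ i ih =>
      have hx' : x (N + i + 1) = (C:ℝ) * x (N + i) - (d:ℝ) := by
        have := hfrac (N + i)
        rw [hkconst i] at this
        linarith
      have : y (N + i + 1) = (C:ℝ) * y (N + i) := by
        rw [hydef]
        simp only
        rw [hx']
        field_simp
        ring
      show y (N + i + 1) = (C:ℝ) ^ (i + 1) * y N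
      rw [this, ih, pow_succ]
      ring
  have hyne : y N ≠ 0 := by
    intro h0
    have hxN : x N = ((((d:ℚ)) / ((C:ℚ) - 1) : ℚ) : ℝ) := by
      have : x N = (d:ℝ) / ((C:ℝ) - 1) := by
        have := h0
        rw [hydef] at this
        simp only at this
        linarith
      rw [this]
      push_cast
      ring
    exact (hxirr N) ⟨(d:ℚ) / ((C:ℚ) - 1), hxN.symm⟩
  have hybound : ∀ m, |y m| ≤ 2 := by
    intro m
    have h1 : (0:ℝ) ≤ (d:ℝ) / ((C:ℝ) - 1) := by
      apply div_nonneg (hk0 N); linarith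
    have h2 : (d:ℝ) / ((C:ℝ) - 1) ≤ 1 := by
      rw [div_le_one (by linarith)]
      exact hk1 N
    rw [hydef, abs_le]
    constructor <;> simp only <;> [nlinarith [hx0 m]; nlinarith [hx1 m]]
  obtain ⟨i, hi⟩ := pow_unbounded_of_one_lt (2 / |y N|) hC1
  have hyNpos : 0 < |y N| := abs_pos.mpr hyne
  have : 2 < (C:ℝ)^i * |y N| := by
    rw [div_lt_iff₀ hyNpos] at hi
    linarith
  have h2 : |y (N + i)| = (C:ℝ)^i * |y N| := by
    rw [hyrec i, abs_mul, abs_of_pos (by positivity : (0:ℝ) < (C:ℝ)^i)]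
  linarith [hybound (N + i), h2 ▸ this]
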